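/- arXiv:2309.06711 — 3 statements merged into one kernel-verified Lean document; each statement's English description precedes it below -/
import Mathlib

section
/- Let λ, σ, ν, θ > 0, τ > 0, h > 0, t ≥ τ, and ε ∈ ℝ. Let X¹, X², Z¹, Z² be four centered, square-integrable real processes indexed by [0,∞), pairwise uncorrelated (Cov between evaluations of any two distinct processes is 0 at all times), with Cov(X^k_s, X^k_t) = (σ²/(2λ))·exp(−λ|s−t|) and Cov(Z^k_s, Z^k_t) = min(s,t) for k = 1,2. For k = 1,2 define the h-horizon return r^k(ε) = θ(X^k_{t+h} − X^k_t) + ν(Z^k_{t+h} − Z^k_t) + ε·Σ_{j=1,2} [ θ((X^j_{t+h} − X^j_t) − (X^j_{t+h−τ} − X^j_{t−τ})) + ν((Z^j_{t+h} − Z^j_t) − (Z^j_{t+h−τ} − Z^j_{t−τ})) ]. Then Cov(r¹(ε), r²(ε)) = 2εA + ε²B, where A = (σ²θ²/λ)·(1 − e^{−λh} − e^{−λτ} + ½e^{−λ(h+τ)} + ½e^{−λ|h−τ|}) + ν²·min(h, τ), and B = Var(V¹ + V²) with V^j = θ((X^j_{t+h} − X^j_t) − (X^j_{t+h−τ} −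 X^j_{t−τ})) + ν((Z^j_{t+h} − Z^j_t) − (Z^j_{t+h−τ} − Z^j_{t−τ})). -/
open MeasureTheory

/-- Covariance of two real random variables. -/
noncomputable def cov {Ω : Type*} [MeasurableSpace Ω] (μ : Measure Ω) (X Y : Ω → ℝ) : ℝ :=
  (∫ ω, X ω * Y ω ∂μ) - (∫ ω, X ω ∂μ) * (∫ ω, Y ω ∂μ)

/-- The momentum term `V = θ((X_{t+h} − X_t) − (X_{t+h−τ} − X_{t−τ}))
  + ν((Z_{t+h} − Z_t) − (Z_{t+h−τ} − Z_{t−τ}))` of a process pair `(X, Z)`. -/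
def momTerm {Ω : Type*} (th nu τ h t : ℝ) (X Z : ℝ → Ω → ℝ) : Ω → ℝ :=
  fun ω => th * ((X (t + h) ω - X t ω) - (X (t + h - τ) ω - X (t - τ) ω))
    + nu * ((Z (t + h) ω - Z t ω) - (Z (t + h - τ) ω - Z (t - τ) ω))

/-- The `h`-horizon return of asset `k` (with own noises `X`, `Z`) to first order in the
coupling `ε`:
`r = θ(X_{t+h} − X_t) + ν(Z_{t+h} − Z_t) + ε(V¹ + V²)`. -/
def ret {Ω : Type*} (th nu eps τ h t : ℝ) (X Z X1 X2 Z1 Z2 : ℝ → Ω → ℝ) : Ω → ℝ :=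
  fun ω => th * (X (t + h) ω - X t ω) + nu * (Z (t + h) ω - Z t ω)
    + eps * (momTerm th nu τ h t X1 Z1 ω + momTerm th nu τ h t X2 Z2 ω)

section CovLemmas
set_option linter.unusedSectionVars false

variable {Ω : Type*} [MeasurableSpace Ω] {μ : Measure Ω} [IsProbabilityMeasure μ]

lemma memL2_integrable {f : Ω → ℝ} (hf : MemLp f 2 μ) : Integrable f μ :=
  hf.integrable one_le_two

lemma memL2_integrable_mul {f g : Ω → ℝ} (hf : MemLp f 2 μ) (hg : MemLp g 2 μ) :
    Integrable (fun ω => f ω * g ω) μ := by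
  have h1 := (hf.add hg).integrable_sq
  have h2 := hf.integrable_sq
  have h3 := hg.integrable_sq
  have e : (fun ω => f ω * g ω) = fun ω => ((f ω + g ω) ^ 2 - f ω ^ 2 - g ω ^ 2) / 2 := by
    funext ω; ring
  rw [e]
  exact (((h1.sub h2).sub h3).div_const 2)

lemma cov_comm (f g : Ω → ℝ) : cov μ f g = cov μ g f := by
  unfold cov
  congr 1
  · exact integral_congr_ae (Filter.Eventually.of_forall fun ω => mul_comm _ _)
  · exact mul_comm _ _

lemma cov_const_mul_left (c : ℝ) (f g : Ω → ℝ) :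
    cov μ (fun ω => c * f ω) g = c * cov μ f g := by
  unfold cov
  have e1 : ∫ ω, c * f ω * g ω ∂μ = c * ∫ ω, f ω * g ω ∂μ := by
    rw [← integral_const_mul]
    congr 1; funext ω; ring
  rw [e1, integral_const_mul]
  ring

lemma cov_const_mul_right (c : ℝ) (f g : Ω → ℝ) :
    cov μ f (fun ω => c * g ω) = c * cov μ f g := by
  rw [cov_comm, cov_const_mul_left, cov_comm]

lemma cov_add_left {f g u : Ω → ℝ} (hf : MemLp f 2 μ) (hg : MemLp g 2 μ)
    (hu : MemLp u 2 μ) :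
    cov μ (fun ω => f ω + g ω) u = cov μ f u + cov μ g u := by
  unfold cov
  have e1 : ∫ ω, (f ω + g ω) * u ω ∂μ
      = (∫ ω, f ω * u ω ∂μ) + ∫ ω, g ω * u ω ∂μ := by
    rw [← integral_add (memL2_integrable_mul hf hu) (memL2_integrable_mul hg hu)]
    congr 1; funext ω; ring
  have e2 : ∫ ω, (f ω + g ω) ∂μ = (∫ ω, f ω ∂μ) + ∫ ω, g ω ∂μ :=
    integral_add (memL2_integrable hf) (memL2_integrable hg)
  rw [e1, e2]
  ring

lemma cov_sub_left {f g u : Ω → ℝ} (hf : MemLp f 2 μ) (hg : MemLp g 2 μ)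
    (hu : MemLp u 2 μ) :
    cov μ (fun ω => f ω - g ω) u = cov μ f u - cov μ g u := by
  unfold cov
  have e1 : ∫ ω, (f ω - g ω) * u ω ∂μ
      = (∫ ω, f ω * u ω ∂μ) - ∫ ω, g ω * u ω ∂μ := by
    rw [← integral_sub (memL2_integrable_mul hf hu) (memL2_integrable_mul hg hu)]
    congr 1; funext ω; ring
  have e2 : ∫ ω, (f ω - g ω) ∂μ = (∫ ω, f ω ∂μ) - ∫ ω, g ω ∂μ :=
    integral_sub (memL2_integrable hf) (memL2_integrable hg)
  rw [e1, e2]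
  ring

lemma cov_add_right {f u v : Ω → ℝ} (hf : MemLp f 2 μ) (hu : MemLp u 2 μ)
    (hv : MemLp v 2 μ) :
    cov μ f (fun ω => u ω + v ω) = cov μ f u + cov μ f v := by
  rw [cov_comm, cov_add_left hu hv hf, cov_comm u f, cov_comm v f]

lemma cov_sub_right {f u v : Ω → ℝ} (hf : MemLp f 2 μ) (hu : MemLp u 2 μ)
    (hv : MemLp v 2 μ) :
    cov μ f (fun ω => u ω - v ω) = cov μ f u - cov μ f v := by
  rw [cov_comm, cov_sub_left hu hv hf, cov_comm u f, cov_comm v f]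

lemma cov_add_expand {f g u v : Ω → ℝ} (hf : MemLp f 2 μ) (hg : MemLp g 2 μ)
    (hu : MemLp u 2 μ) (hv : MemLp v 2 μ) :
    cov μ (fun ω => f ω + g ω) (fun ω => u ω + v ω)
      = cov μ f u + cov μ f v + cov μ g u + cov μ g v := by
  have huv : MemLp (fun ω => u ω + v ω) 2 μ := hu.add hv
  rw [cov_add_left hf hg huv, cov_add_right hf hu hv, cov_add_right hg hu hv]
  ring

lemma cov_diff_diff {f g u v : Ω → ℝ} (hf : MemLp f 2 μ) (hg : MemLp g 2 μ)
    (hu : MemLp u 2 μ) (hv : MemLp v 2 μ) :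
    cov μ (fun ω => f ω - g ω) (fun ω => u ω - v ω)
      = cov μ f u - cov μ f v - cov μ g u + cov μ g v := by
  have huv : MemLp (fun ω => u ω - v ω) 2 μ := hu.sub hv
  rw [cov_sub_left hf hg huv, cov_sub_right hf hu hv, cov_sub_right hg hu hv]
  ring

lemma cov_diff_diff2 {f g u1 u2 v1 v2 : Ω → ℝ} (hf : MemLp f 2 μ) (hg : MemLp g 2 μ)
    (hu1 : MemLp u1 2 μ) (hu2 : MemLp u2 2 μ) (hv1 : MemLp v1 2 μ) (hv2 : MemLp v2 2 μ) :
    cov μ (fun ω => f ω - g ω) (fun ω => (u1 ω - u2 ω) - (v1 ω - v2 ω))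
      = (cov μ f u1 - cov μ f u2 - cov μ g u1 + cov μ g u2)
        - (cov μ f v1 - cov μ f v2 - cov μ g v1 + cov μ g v2) := by
  have hU : MemLp (fun ω => u1 ω - u2 ω) 2 μ := hu1.sub hu2
  have hV : MemLp (fun ω => v1 ω - v2 ω) 2 μ := hv1.sub hv2
  have hfg : MemLp (fun ω => f ω - g ω) 2 μ := hf.sub hg
  rw [cov_sub_right hfg hU hV, cov_diff_diff hf hg hu1 hu2, cov_diff_diff hf hg hv1 hv2]

lemma cov_base_mom (th nu τ h t : ℝ) {W Y W' Y' : ℝ → Ω → ℝ}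
    (hWa : MemLp (W (t + h)) 2 μ) (hWb : MemLp (W t) 2 μ)
    (hYa : MemLp (Y (t + h)) 2 μ) (hYb : MemLp (Y t) 2 μ)
    (hW'a : MemLp (W' (t + h)) 2 μ) (hW'b : MemLp (W' t) 2 μ)
    (hW'c : MemLp (W' (t + h - τ)) 2 μ) (hW'd : MemLp (W' (t - τ)) 2 μ)
    (hY'a : MemLp (Y' (t + h)) 2 μ) (hY'b : MemLp (Y' t) 2 μ)
    (hY'c : MemLp (Y' (t + h - τ)) 2 μ) (hY'd : MemLp (Y' (t - τ)) 2 μ) :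
    cov μ (fun ω => th * (W (t + h) ω - W t ω) + nu * (Y (t + h) ω - Y t ω))
        (momTerm th nu τ h t W' Y')
      = th * th * ((cov μ (W (t + h)) (W' (t + h)) - cov μ (W (t + h)) (W' t)
            - cov μ (W t) (W' (t + h)) + cov μ (W t) (W' t))
          - (cov μ (W (t + h)) (W' (t + h - τ)) - cov μ (W (t + h)) (W' (t - τ))
            - cov μ (W t) (W' (t + h - τ)) + cov μ (W t) (W' (t - τ))))
      + th * nu * ((cov μ (W (t + h)) (Y' (t + h)) - cov μ (W (t + h)) (Y' t)
            - cov μ (W t) (Y' (t + h)) + cov μ (W t) (Y' t))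
          - (cov μ (W (t + h)) (Y' (t + h - τ)) - cov μ (W (t + h)) (Y' (t - τ))
            - cov μ (W t) (Y' (t + h - τ)) + cov μ (W t) (Y' (t - τ))))
      + nu * th * ((cov μ (Y (t + h)) (W' (t + h)) - cov μ (Y (t + h)) (W' t)
            - cov μ (Y t) (W' (t + h)) + cov μ (Y t) (W' t))
          - (cov μ (Y (t + h)) (W' (t + h - τ)) - cov μ (Y (t + h)) (W' (t - τ))
            - cov μ (Y t) (W' (t + h - τ)) + cov μ (Y t) (W' (t - τ))))
      + nu * nu * ((cov μ (Y (t + h)) (Y' (t + h)) - cov μ (Y (t + h)) (Y' t)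
            - cov μ (Y t) (Y' (t + h)) + cov μ (Y t) (Y' t))
          - (cov μ (Y (t + h)) (Y' (t + h - τ)) - cov μ (Y (t + h)) (Y' (t - τ))
            - cov μ (Y t) (Y' (t + h - τ)) + cov μ (Y t) (Y' (t - τ)))) := by
  have hDW : MemLp (fun ω => W (t + h) ω - W t ω) 2 μ := hWa.sub hWb
  have hDY : MemLp (fun ω => Y (t + h) ω - Y t ω) 2 μ := hYa.sub hYb
  have hDDW : MemLp (fun ω => (W' (t + h) ω - W' t ω) - (W' (t + h - τ) ω - W' (t - τ) ω)) 2 μ :=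
    (hW'a.sub hW'b).sub (hW'c.sub hW'd)
  have hDDY : MemLp (fun ω => (Y' (t + h) ω - Y' t ω) - (Y' (t + h - τ) ω - Y' (t - τ) ω)) 2 μ :=
    (hY'a.sub hY'b).sub (hY'c.sub hY'd)
  have h1 : MemLp (fun ω => th * (W (t + h) ω - W t ω)) 2 μ := hDW.const_mul th
  have h2 : MemLp (fun ω => nu * (Y (t + h) ω - Y t ω)) 2 μ := hDY.const_mul nu
  have h3 : MemLp (fun ω =>
      th * ((W' (t + h) ω - W' t ω) - (W' (t + h - τ) ω - W' (t - τ) ω))) 2 μ :=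
    hDDW.const_mul th
  have h4 : MemLp (fun ω =>
      nu * ((Y' (t + h) ω - Y' t ω) - (Y' (t + h - τ) ω - Y' (t - τ) ω))) 2 μ :=
    hDDY.const_mul nu
  show cov μ _ (fun ω =>
      th * ((W' (t + h) ω - W' t ω) - (W' (t + h - τ) ω - W' (t - τ) ω))
      + nu * ((Y' (t + h) ω - Y' t ω) - (Y' (t + h - τ) ω - Y' (t - τ) ω))) = _
  rw [cov_add_expand h1 h2 h3 h4]
  simp only [cov_const_mul_left, cov_const_mul_right]
  rw [cov_diff_diff2 hWa hWb hW'a hW'b hW'c hW'd,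
      cov_diff_diff2 hWa hWb hY'a hY'b hY'c hY'd,
      cov_diff_diff2 hYa hYb hW'a hW'b hW'c hW'd,
      cov_diff_diff2 hYa hYb hY'a hY'b hY'c hY'd]
  ring

lemma cov_base_mom_zero (th nu : ℝ) {τ h t : ℝ}
    (ha : 0 ≤ t + h) (hb : 0 ≤ t) (hc : 0 ≤ t + h - τ) (hd : 0 ≤ t - τ)
    {W Y W' Y' : ℝ → Ω → ℝ}
    (hWa : MemLp (W (t + h)) 2 μ) (hWb : MemLp (W t) 2 μ)
    (hYa : MemLp (Y (t + h)) 2 μ) (hYb : MemLp (Y t) 2 μ)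
    (hW'a : MemLp (W' (t + h)) 2 μ) (hW'b : MemLp (W' t) 2 μ)
    (hW'c : MemLp (W' (t + h - τ)) 2 μ) (hW'd : MemLp (W' (t - τ)) 2 μ)
    (hY'a : MemLp (Y' (t + h)) 2 μ) (hY'b : MemLp (Y' t) 2 μ)
    (hY'c : MemLp (Y' (t + h - τ)) 2 μ) (hY'd : MemLp (Y' (t - τ)) 2 μ)
    (hWW : ∀ s u : ℝ, 0 ≤ s → 0 ≤ u → cov μ (W s) (W' u) = 0)
    (hWY : ∀ s u : ℝ, 0 ≤ s → 0 ≤ u → cov μ (W s) (Y' u) = 0)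
    (hYW : ∀ s u : ℝ, 0 ≤ s → 0 ≤ u → cov μ (Y s) (W' u) = 0)
    (hYY : ∀ s u : ℝ, 0 ≤ s → 0 ≤ u → cov μ (Y s) (Y' u) = 0) :
    cov μ (fun ω => th * (W (t + h) ω - W t ω) + nu * (Y (t + h) ω - Y t ω))
        (momTerm th nu τ h t W' Y') = 0 := by
  rw [cov_base_mom th nu τ h t hWa hWb hYa hYb hW'a hW'b hW'c hW'd hY'a hY'b hY'c hY'd]
  rw [hWW _ _ ha ha, hWW _ _ ha hb, hWW _ _ hb ha, hWW _ _ hb hb,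
      hWW _ _ ha hc, hWW _ _ ha hd, hWW _ _ hb hc, hWW _ _ hb hd,
      hWY _ _ ha ha, hWY _ _ ha hb, hWY _ _ hb ha, hWY _ _ hb hb,
      hWY _ _ ha hc, hWY _ _ ha hd, hWY _ _ hb hc, hWY _ _ hb hd,
      hYW _ _ ha ha, hYW _ _ ha hb, hYW _ _ hb ha, hYW _ _ hb hb,
      hYW _ _ ha hc, hYW _ _ ha hd, hYW _ _ hb hc, hYW _ _ hb hd,
      hYY _ _ ha ha, hYY _ _ ha hb, hYY _ _ hb ha, hYY _ _ hb hb,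
      hYY _ _ ha hc, hYY _ _ ha hd, hYY _ _ hb hc, hYY _ _ hb hd]
  ring

lemma cov_base_base_zero (th nu : ℝ) {h t : ℝ} (ha : 0 ≤ t + h) (hb : 0 ≤ t)
    {W Y W' Y' : ℝ → Ω → ℝ}
    (hWa : MemLp (W (t + h)) 2 μ) (hWb : MemLp (W t) 2 μ)
    (hYa : MemLp (Y (t + h)) 2 μ) (hYb : MemLp (Y t) 2 μ)
    (hW'a : MemLp (W' (t + h)) 2 μ) (hW'b : MemLp (W' t) 2 μ)
    (hY'a : MemLp (Y' (t + h)) 2 μ) (hY'b : MemLp (Y' t) 2 μ)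
    (hWW : ∀ s u : ℝ, 0 ≤ s → 0 ≤ u → cov μ (W s) (W' u) = 0)
    (hWY : ∀ s u : ℝ, 0 ≤ s → 0 ≤ u → cov μ (W s) (Y' u) = 0)
    (hYW : ∀ s u : ℝ, 0 ≤ s → 0 ≤ u → cov μ (Y s) (W' u) = 0)
    (hYY : ∀ s u : ℝ, 0 ≤ s → 0 ≤ u → cov μ (Y s) (Y' u) = 0) :
    cov μ (fun ω => th * (W (t + h) ω - W t ω) + nu * (Y (t + h) ω - Y t ω))
        (fun ω => th * (W' (t + h) ω - W' t ω) + nu * (Y' (t + h) ω - Y' t ω)) = 0 := by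
  have h1 : MemLp (fun ω => th * (W (t + h) ω - W t ω)) 2 μ := (hWa.sub hWb).const_mul th
  have h2 : MemLp (fun ω => nu * (Y (t + h) ω - Y t ω)) 2 μ := (hYa.sub hYb).const_mul nu
  have h3 : MemLp (fun ω => th * (W' (t + h) ω - W' t ω)) 2 μ := (hW'a.sub hW'b).const_mul th
  have h4 : MemLp (fun ω => nu * (Y' (t + h) ω - Y' t ω)) 2 μ := (hY'a.sub hY'b).const_mul nu
  rw [cov_add_expand h1 h2 h3 h4]
  simp only [cov_const_mul_left, cov_const_mul_right]
  rw [cov_diff_diff hWa hWb hW'a hW'b, cov_diff_diff hWa hWb hY'a hY'b,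
      cov_diff_diff hYa hYb hW'a hW'b, cov_diff_diff hYa hYb hY'a hY'b]
  rw [hWW _ _ ha ha, hWW _ _ ha hb, hWW _ _ hb ha, hWW _ _ hb hb,
      hWY _ _ ha ha, hWY _ _ ha hb, hWY _ _ hb ha, hWY _ _ hb hb,
      hYW _ _ ha ha, hYW _ _ ha hb, hYW _ _ hb ha, hYW _ _ hb hb,
      hYY _ _ ha ha, hYY _ _ ha hb, hYY _ _ hb ha, hYY _ _ hb hb]
  ring

lemma cov_base_mom_val {lam sig th nu τ h t : ℝ}
    (hlam : 0 < lam) (hτ : 0 < τ) (hh : 0 < h) (ht : τ ≤ t)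
    {W Y : ℝ → Ω → ℝ}
    (hWa : MemLp (W (t + h)) 2 μ) (hWb : MemLp (W t) 2 μ)
    (hWc : MemLp (W (t + h - τ)) 2 μ) (hWd : MemLp (W (t - τ)) 2 μ)
    (hYa : MemLp (Y (t + h)) 2 μ) (hYb : MemLp (Y t) 2 μ)
    (hYc : MemLp (Y (t + h - τ)) 2 μ) (hYd : MemLp (Y (t - τ)) 2 μ)
    (hWcov : ∀ s u : ℝ, 0 ≤ s → 0 ≤ u →
      cov μ (W s) (W u) = sig ^ 2 / (2 * lam) * Real.exp (-(lam * |s - u|)))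
    (hYcov : ∀ s u : ℝ, 0 ≤ s → 0 ≤ u → cov μ (Y s) (Y u) = min s u)
    (hWY : ∀ s u : ℝ, 0 ≤ s → 0 ≤ u → cov μ (W s) (Y u) = 0)
    (hYW : ∀ s u : ℝ, 0 ≤ s → 0 ≤ u → cov μ (Y s) (W u) = 0) :
    cov μ (fun ω => th * (W (t + h) ω - W t ω) + nu * (Y (t + h) ω - Y t ω))
        (momTerm th nu τ h t W Y)
      = sig ^ 2 * th ^ 2 / lam *
          (1 - Real.exp (-(lam * h)) - Real.exp (-(lam * τ))
            + (1 / 2) * Real.exp (-(lam * (h + τ)))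
            + (1 / 2) * Real.exp (-(lam * |h - τ|)))
        + nu ^ 2 * min h τ := by
  have hb : (0:ℝ) ≤ t := le_trans hτ.le ht
  have ha : (0:ℝ) ≤ t + h := by linarith
  have hc : (0:ℝ) ≤ t + h - τ := by linarith
  have hd : (0:ℝ) ≤ t - τ := by linarith
  rw [cov_base_mom th nu τ h t hWa hWb hYa hYb hWa hWb hWc hWd hYa hYb hYc hYd]
  rw [hWcov _ _ ha ha, hWcov _ _ ha hb, hWcov _ _ hb ha, hWcov _ _ hb hb,
      hWcov _ _ ha hc, hWcov _ _ ha hd, hWcov _ _ hb hc, hWcov _ _ hb hd,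
      hYcov _ _ ha ha, hYcov _ _ ha hb, hYcov _ _ hb ha, hYcov _ _ hb hb,
      hYcov _ _ ha hc, hYcov _ _ ha hd, hYcov _ _ hb hc, hYcov _ _ hb hd,
      hWY _ _ ha ha, hWY _ _ ha hb, hWY _ _ hb ha, hWY _ _ hb hb,
      hWY _ _ ha hc, hWY _ _ ha hd, hWY _ _ hb hc, hWY _ _ hb hd,
      hYW _ _ ha ha, hYW _ _ ha hb, hYW _ _ hb ha, hYW _ _ hb hb,
      hYW _ _ ha hc, hYW _ _ ha hd, hYW _ _ hb hc, hYW _ _ hb hd]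
  have e0 : |t + h - (t + h)| = 0 := by simp
  have e1 : |t + h - t| = h := by rw [show t + h - t = h by ring]; exact abs_of_pos hh
  have e2 : |t - (t + h)| = h := by
    rw [show t - (t + h) = -h by ring, abs_neg]; exact abs_of_pos hh
  have e3 : |t - t| = 0 := by simp
  have e4 : |t + h - (t + h - τ)| = τ := by
    rw [show t + h - (t + h - τ) = τ by ring]; exact abs_of_pos hτ
  have e5 : |t + h - (t - τ)| = h + τ := by
    rw [show t + h - (t - τ) = h + τ by ring]; exact abs_of_pos (by linarith)
  have e6 : |t - (t + h - τ)| = |h - τ| := by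
    rw [show t - (t + h - τ) = -(h - τ) by ring, abs_neg]
  have e7 : |t - (t - τ)| = τ := by
    rw [show t - (t - τ) = τ by ring]; exact abs_of_pos hτ
  have m0 : min (t + h) (t + h) = t + h := min_self _
  have m1 : min (t + h) t = t := min_eq_right (by linarith)
  have m2 : min t (t + h) = t := min_eq_left (by linarith)
  have m3 : min t t = t := min_self _
  have m4 : min (t + h) (t + h - τ) = t + h - τ := min_eq_right (by linarith)
  have m5 : min (t + h) (t - τ) = t - τ := min_eq_right (by linarith)
  have m7 : min t (t - τ) = t - τ := min_eq_right (by linarith)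
  rw [e0, e1, e2, e3, e4, e5, e6, e7, m0, m1, m2, m3, m4, m5, m7]
  have hlam' : lam ≠ 0 := ne_of_gt hlam
  rcases le_total h τ with hcase | hcase
  · rw [min_eq_left hcase, min_eq_right (show t + h - τ ≤ t by linarith)]
    simp only [mul_zero, neg_zero, Real.exp_zero]
    field_simp
    ring
  · rw [min_eq_right hcase, min_eq_left (show t ≤ t + h - τ by linarith)]
    simp only [mul_zero, neg_zero, Real.exp_zero]
    field_simp
    ring

end CovLemmas

/-- Equation (17) of the paper, with exact second-order remainder: in the Gaussian momentum
model, the cross-covariance of the `h`-horizon returns satisfies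
`Cov(r¹(ε), r²(ε)) = 2εA + ε²·Var(V¹ + V²)` with
`A = (σ²θ²/λ)(1 − e^{−λh} − e^{−λτ} + ½e^{−λ(h+τ)} + ½e^{−λ|h−τ|}) + ν²·min(h,τ)`. -/
theorem cross_covariance_first_order {Ω : Type*} [MeasurableSpace Ω] (μ : Measure Ω)
    [IsProbabilityMeasure μ]
    (lam sig nu th τ h t eps : ℝ)
    (hlam : 0 < lam) (hsig : 0 < sig) (hnu : 0 < nu) (hth : 0 < th)
    (hτ : 0 < τ) (hh : 0 < h) (ht : τ ≤ t)
    (X1 X2 Z1 Z2 : ℝ → Ω → ℝ)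
    (hX1L2 : ∀ s : ℝ, 0 ≤ s → MemLp (X1 s) 2 μ)
    (hX2L2 : ∀ s : ℝ, 0 ≤ s → MemLp (X2 s) 2 μ)
    (hZ1L2 : ∀ s : ℝ, 0 ≤ s → MemLp (Z1 s) 2 μ)
    (hZ2L2 : ∀ s : ℝ, 0 ≤ s → MemLp (Z2 s) 2 μ)
    (hX1cent : ∀ s : ℝ, 0 ≤ s → ∫ ω, X1 s ω ∂μ = 0)
    (hX2cent : ∀ s : ℝ, 0 ≤ s → ∫ ω, X2 s ω ∂μ = 0)
    (hZ1cent : ∀ s : ℝ, 0 ≤ s → ∫ ω, Z1 s ω ∂μ = 0)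
    (hZ2cent : ∀ s : ℝ, 0 ≤ s → ∫ ω, Z2 s ω ∂μ = 0)
    (hX1cov : ∀ s u : ℝ, 0 ≤ s → 0 ≤ u →
      cov μ (X1 s) (X1 u) = sig ^ 2 / (2 * lam) * Real.exp (-(lam * |s - u|)))
    (hX2cov : ∀ s u : ℝ, 0 ≤ s → 0 ≤ u →
      cov μ (X2 s) (X2 u) = sig ^ 2 / (2 * lam) * Real.exp (-(lam * |s - u|)))
    (hZ1cov : ∀ s u : ℝ, 0 ≤ s → 0 ≤ u → cov μ (Z1 s) (Z1 u) = min s u)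
    (hZ2cov : ∀ s u : ℝ, 0 ≤ s → 0 ≤ u → cov μ (Z2 s) (Z2 u) = min s u)
    (hX1X2 : ∀ s u : ℝ, 0 ≤ s → 0 ≤ u → cov μ (X1 s) (X2 u) = 0)
    (hX1Z1 : ∀ s u : ℝ, 0 ≤ s → 0 ≤ u → cov μ (X1 s) (Z1 u) = 0)
    (hX1Z2 : ∀ s u : ℝ, 0 ≤ s → 0 ≤ u → cov μ (X1 s) (Z2 u) = 0)
    (hX2Z1 : ∀ s u : ℝ, 0 ≤ s → 0 ≤ u → cov μ (X2 s) (Z1 u) = 0)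
    (hX2Z2 : ∀ s u : ℝ, 0 ≤ s → 0 ≤ u → cov μ (X2 s) (Z2 u) = 0)
    (hZ1Z2 : ∀ s u : ℝ, 0 ≤ s → 0 ≤ u → cov μ (Z1 s) (Z2 u) = 0) :
    cov μ (ret th nu eps τ h t X1 Z1 X1 X2 Z1 Z2) (ret th nu eps τ h t X2 Z2 X1 X2 Z1 Z2)
      = 2 * eps *
          (sig ^ 2 * th ^ 2 / lam *
              (1 - Real.exp (-(lam * h)) - Real.exp (-(lam * τ))
                + (1 / 2) * Real.exp (-(lam * (h + τ)))
                + (1 / 2) * Real.exp (-(lam * |h - τ|)))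
            + nu ^ 2 * min h τ)
        + eps ^ 2 *
          cov μ (fun ω => momTerm th nu τ h t X1 Z1 ω + momTerm th nu τ h t X2 Z2 ω)
            (fun ω => momTerm th nu τ h t X1 Z1 ω + momTerm th nu τ h t X2 Z2 ω) := by
  
  have hb : (0:ℝ) ≤ t := le_trans hτ.le ht
  have ha : (0:ℝ) ≤ t + h := by linarith
  have hc : (0:ℝ) ≤ t + h - τ := by linarith
  have hd : (0:ℝ) ≤ t - τ := by linarith
  have X1a := hX1L2 _ ha; have X1b := hX1L2 _ hb; have X1c := hX1L2 _ hc; have X1d := hX1L2 _ hd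
  have X2a := hX2L2 _ ha; have X2b := hX2L2 _ hb; have X2c := hX2L2 _ hc; have X2d := hX2L2 _ hd
  have Z1a := hZ1L2 _ ha; have Z1b := hZ1L2 _ hb; have Z1c := hZ1L2 _ hc; have Z1d := hZ1L2 _ hd
  have Z2a := hZ2L2 _ ha; have Z2b := hZ2L2 _ hb; have Z2c := hZ2L2 _ hc; have Z2d := hZ2L2 _ hd
  have hX2X1 : ∀ s u : ℝ, 0 ≤ s → 0 ≤ u → cov μ (X2 s) (X1 u) = 0 :=
    fun s u hs hu => (cov_comm _ _).trans (hX1X2 u s hu hs)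
  have hZ1X1 : ∀ s u : ℝ, 0 ≤ s → 0 ≤ u → cov μ (Z1 s) (X1 u) = 0 :=
    fun s u hs hu => (cov_comm _ _).trans (hX1Z1 u s hu hs)
  have hZ2X2 : ∀ s u : ℝ, 0 ≤ s → 0 ≤ u → cov μ (Z2 s) (X2 u) = 0 :=
    fun s u hs hu => (cov_comm _ _).trans (hX2Z2 u s hu hs)
  have hZ1X2 : ∀ s u : ℝ, 0 ≤ s → 0 ≤ u → cov μ (Z1 s) (X2 u) = 0 :=
    fun s u hs hu => (cov_comm _ _).trans (hX2Z1 u s hu hs)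
  have hZ2X1 : ∀ s u : ℝ, 0 ≤ s → 0 ≤ u → cov μ (Z2 s) (X1 u) = 0 :=
    fun s u hs hu => (cov_comm _ _).trans (hX1Z2 u s hu hs)
  have hZ2Z1 : ∀ s u : ℝ, 0 ≤ s → 0 ≤ u → cov μ (Z2 s) (Z1 u) = 0 :=
    fun s u hs hu => (cov_comm _ _).trans (hZ1Z2 u s hu hs)
  have hM1 : MemLp (momTerm th nu τ h t X1 Z1) 2 μ :=
    MemLp.add (((X1a.sub X1b).sub (X1c.sub X1d)).const_mul th)
      (((Z1a.sub Z1b).sub (Z1c.sub Z1d)).const_mul nu)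
  have hM2 : MemLp (momTerm th nu τ h t X2 Z2) 2 μ :=
    MemLp.add (((X2a.sub X2b).sub (X2c.sub X2d)).const_mul th)
      (((Z2a.sub Z2b).sub (Z2c.sub Z2d)).const_mul nu)
  have hM : MemLp (fun ω => momTerm th nu τ h t X1 Z1 ω + momTerm th nu τ h t X2 Z2 ω) 2 μ :=
    hM1.add hM2
  have heM : MemLp
      (fun ω => eps * (momTerm th nu τ h t X1 Z1 ω + momTerm th nu τ h t X2 Z2 ω)) 2 μ :=
    hM.const_mul eps
  have hB1 : MemLp (fun ω => th * (X1 (t + h) ω - X1 t ω) + nu * (Z1 (t + h) ω - Z1 t ω)) 2 μ :=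
    ((X1a.sub X1b).const_mul th).add ((Z1a.sub Z1b).const_mul nu)
  have hB2 : MemLp (fun ω => th * (X2 (t + h) ω - X2 t ω) + nu * (Z2 (t + h) ω - Z2 t ω)) 2 μ :=
    ((X2a.sub X2b).const_mul th).add ((Z2a.sub Z2b).const_mul nu)
  have k11 : cov μ (fun ω => th * (X1 (t + h) ω - X1 t ω) + nu * (Z1 (t + h) ω - Z1 t ω))
      (momTerm th nu τ h t X1 Z1)
      = sig ^ 2 * th ^ 2 / lam *
          (1 - Real.exp (-(lam * h)) - Real.exp (-(lam * τ))
            + (1 / 2) * Real.exp (-(lam * (h + τ)))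
            + (1 / 2) * Real.exp (-(lam * |h - τ|)))
        + nu ^ 2 * min h τ :=
    cov_base_mom_val hlam hτ hh ht X1a X1b X1c X1d Z1a Z1b Z1c Z1d hX1cov hZ1cov hX1Z1 hZ1X1
  have k12 : cov μ (fun ω => th * (X1 (t + h) ω - X1 t ω) + nu * (Z1 (t + h) ω - Z1 t ω))
      (momTerm th nu τ h t X2 Z2) = 0 :=
    cov_base_mom_zero th nu ha hb hc hd X1a X1b Z1a Z1b X2a X2b X2c X2d Z2a Z2b Z2c Z2d
      hX1X2 hX1Z2 hZ1X2 hZ1Z2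
  have k22 : cov μ (fun ω => th * (X2 (t + h) ω - X2 t ω) + nu * (Z2 (t + h) ω - Z2 t ω))
      (momTerm th nu τ h t X2 Z2)
      = sig ^ 2 * th ^ 2 / lam *
          (1 - Real.exp (-(lam * h)) - Real.exp (-(lam * τ))
            + (1 / 2) * Real.exp (-(lam * (h + τ)))
            + (1 / 2) * Real.exp (-(lam * |h - τ|)))
        + nu ^ 2 * min h τ :=
    cov_base_mom_val hlam hτ hh ht X2a X2b X2c X2d Z2a Z2b Z2c Z2d hX2cov hZ2cov hX2Z2 hZ2X2
  have k21 : cov μ (momTerm th nu τ h t X1 Z1)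
      (fun ω => th * (X2 (t + h) ω - X2 t ω) + nu * (Z2 (t + h) ω - Z2 t ω)) = 0 :=
    (cov_comm _ _).trans
      (cov_base_mom_zero th nu ha hb hc hd X2a X2b Z2a Z2b X1a X1b X1c X1d Z1a Z1b Z1c Z1d
        hX2X1 hX2Z1 hZ2X1 hZ2Z1)
  have k22' : cov μ (momTerm th nu τ h t X2 Z2)
      (fun ω => th * (X2 (t + h) ω - X2 t ω) + nu * (Z2 (t + h) ω - Z2 t ω))
      = sig ^ 2 * th ^ 2 / lam *
          (1 - Real.exp (-(lam * h)) - Real.exp (-(lam * τ))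
            + (1 / 2) * Real.exp (-(lam * (h + τ)))
            + (1 / 2) * Real.exp (-(lam * |h - τ|)))
        + nu ^ 2 * min h τ :=
    (cov_comm _ _).trans k22
  have kBB : cov μ (fun ω => th * (X1 (t + h) ω - X1 t ω) + nu * (Z1 (t + h) ω - Z1 t ω))
      (fun ω => th * (X2 (t + h) ω - X2 t ω) + nu * (Z2 (t + h) ω - Z2 t ω)) = 0 :=
    cov_base_base_zero th nu ha hb X1a X1b Z1a Z1b X2a X2b Z2a Z2b hX1X2 hX1Z2 hZ1X2 hZ1Z2
  unfold ret
  rw [cov_add_expand hB1 heM hB2 heM]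
  simp only [cov_const_mul_left, cov_const_mul_right]
  rw [kBB, cov_add_right hB1 hM1 hM2, k11, k12,
      cov_add_left hM1 hM2 hB2, k21, k22']
  ring
end

section
/- Let λ, σ, ν, θ > 0, τ > 0, h > 0, t ≥ τ. Let X¹, X², Z¹, Z² be four centered, square-integrable real processes indexed by [0,∞), pairwise uncorrelated, with Cov(X^k_s, X^k_t) = (σ²/(2λ))·exp(−λ|s−t|) and Cov(Z^k_s, Z^k_t) = min(s,t) for k = 1,2. For ε ∈ ℝ and k = 1,2 define r^k(ε) = θ(X^k_{t+h} − X^k_t) + ν(Z^k_{t+h} − Z^k_t) + ε·Σ_{j=1,2}[θ((X^j_{t+h} − X^j_t) − (X^j_{t+h−τ} − X^j_{t−τ})) + ν((Z^j_{t+h} − Z^j_t) − (Z^j_{t+h−τ} − Z^j_{t−τ}))], and for ε in a punctured neighbourhood of 0 let ρ_ε(h) = Cov(r¹(ε), r²(ε))/√(Var(r¹(ε))·Var(r²(ε))). Then, as ε → 0 (ε ≠ 0), ρ_ε(h)/(2ε) converges to [θ²·(1 − e^{−λh} − e^{−λτ} + ½e^{−λ(h+τ)} + ½e^{−λ|h−τ|})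 + ξ·min(h,τ)] / [θ²·(1 − e^{−λh}) + ξh], where ξ = ν²λ/σ². -/
open MeasureTheory Filter

/-! ### Auxiliary lemmas -/

lemma cov_comm' {Ω : Type*} [MeasurableSpace Ω] (μ : Measure Ω) (X Y : Ω → ℝ) :
    cov μ X Y = cov μ Y X := by
  unfold cov
  rw [mul_comm]
  congr 1
  exact integral_congr_ae (Filter.Eventually.of_forall fun ω => mul_comm _ _)

lemma integrable_mul_of_memℒp_two {Ω : Type*} [MeasurableSpace Ω] {μ : Measure Ω}
    {f g : Ω → ℝ} (hf : MemLp f 2 μ) (hg : MemLp g 2 μ) :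
    Integrable (fun ω => f ω * g ω) μ := by
  have h : MemLp (f • g) 1 μ := MemLp.smul (r := 1) hg hf
  rw [memLp_one_iff_integrable] at h
  exact h

lemma cov_sum {Ω : Type*} [MeasurableSpace Ω] (μ : Measure Ω) [IsFiniteMeasure μ] {n : ℕ}
    (f g : Fin n → Ω → ℝ)
    (hf : ∀ i, MemLp (f i) 2 μ) (hg : ∀ j, MemLp (g j) 2 μ) (a b : Fin n → ℝ) :
    cov μ (fun ω => ∑ i, a i * f i ω) (fun ω => ∑ j, b j * g j ω)
      = ∑ i, ∑ j, a i * b j * cov μ (f i) (g j) := by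
  have hfi : ∀ i, Integrable (f i) μ := fun i => (hf i).integrable one_le_two
  have hgi : ∀ j, Integrable (g j) μ := fun j => (hg j).integrable one_le_two
  have hfg : ∀ i j, Integrable (fun ω => f i ω * g j ω) μ := fun i j =>
    integrable_mul_of_memℒp_two (hf i) (hg j)
  unfold cov
  have h1 : (∫ ω, (∑ i, a i * f i ω) * (∑ j, b j * g j ω) ∂μ)
      = ∑ i, ∑ j, a i * b j * ∫ ω, f i ω * g j ω ∂μ := by
    have hpt : ∀ ω, (∑ i, a i * f i ω) * (∑ j, b j * g j ω)
        = ∑ i, ∑ j, a i * b j * (f i ω * g j ω) := by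
      intro ω
      rw [Finset.sum_mul_sum]
      exact Finset.sum_congr rfl fun i _ => Finset.sum_congr rfl fun j _ => by ring
    simp_rw [hpt]
    rw [integral_finset_sum _ fun i _ =>
      integrable_finset_sum _ fun j _ => ((hfg i j).const_mul _)]
    refine Finset.sum_congr rfl fun i _ => ?_
    rw [integral_finset_sum _ fun j _ => ((hfg i j).const_mul _)]
    exact Finset.sum_congr rfl fun j _ => integral_const_mul _ _
  have h2 : ∀ (k : Fin n → Ω → ℝ) (c : Fin n → ℝ), (∀ i, Integrable (k i) μ) →
      (∫ ω, (∑ i, c i * k i ω) ∂μ) = ∑ i, c i * ∫ ω, k i ω ∂μ := by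
    intro k c hk
    rw [integral_finset_sum _ fun i _ => (hk i).const_mul _]
    exact Finset.sum_congr rfl fun i _ => integral_const_mul _ _
  rw [h1, h2 f a hfi, h2 g b hgi, Finset.sum_mul_sum, ← Finset.sum_sub_distrib]
  refine Finset.sum_congr rfl fun i _ => ?_
  rw [← Finset.sum_sub_distrib]
  exact Finset.sum_congr rfl fun j _ => by ring

/-- The sixteen elementary random variables underlying the two returns. -/
def bvec {Ω : Type*} (X1 X2 Z1 Z2 : ℝ → Ω → ℝ) (τ h t : ℝ) : Fin 16 → Ω → ℝ :=
  ![X1 (t + h), X1 t, X1 (t + h - τ), X1 (t - τ),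
    Z1 (t + h), Z1 t, Z1 (t + h - τ), Z1 (t - τ),
    X2 (t + h), X2 t, X2 (t + h - τ), X2 (t - τ),
    Z2 (t + h), Z2 t, Z2 (t + h - τ), Z2 (t - τ)]

/-- Coefficients of the first return in the basis `bvec`. -/
def cvecA (th nu eps : ℝ) : Fin 16 → ℝ :=
  ![th * (1 + eps), -(th * (1 + eps)), -(eps * th), eps * th,
    nu * (1 + eps), -(nu * (1 + eps)), -(eps * nu), eps * nu,
    eps * th, -(eps * th), -(eps * th), eps * th,
    eps * nu, -(eps * nu), -(eps * nu), eps * nu]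

/-- Coefficients of the second return in the basis `bvec`. -/
def cvecB (th nu eps : ℝ) : Fin 16 → ℝ :=
  ![eps * th, -(eps * th), -(eps * th), eps * th,
    eps * nu, -(eps * nu), -(eps * nu), eps * nu,
    th * (1 + eps), -(th * (1 + eps)), -(eps * th), eps * th,
    nu * (1 + eps), -(nu * (1 + eps)), -(eps * nu), eps * nu]

lemma rep1 {Ω : Type*} (th nu eps τ h t : ℝ) (X1 X2 Z1 Z2 : ℝ → Ω → ℝ) :
    ret th nu eps τ h t X1 Z1 X1 X2 Z1 Z2
      = fun ω => ∑ i, cvecA th nu eps i * bvec X1 X2 Z1 Z2 τ h t i ω := by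
  funext ω
  simp [ret, momTerm, cvecA, bvec, Fin.sum_univ_succ]
  ring

lemma rep2 {Ω : Type*} (th nu eps τ h t : ℝ) (X1 X2 Z1 Z2 : ℝ → Ω → ℝ) :
    ret th nu eps τ h t X2 Z2 X1 X2 Z1 Z2
      = fun ω => ∑ i, cvecB th nu eps i * bvec X1 X2 Z1 Z2 τ h t i ω := by
  funext ω
  simp [ret, momTerm, cvecB, bvec, Fin.sum_univ_succ]
  ring

set_option maxHeartbeats 4000000 in
/-- The asymptotic (small-`ε`) form of Theorem 3.1 of the paper: the cross-correlation
`ρ_ε(h)` of the two `h`-horizon returns satisfies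
`ρ_ε(h)/(2ε) → [θ²(1 − e^{−λh} − e^{−λτ} + ½e^{−λ(h+τ)} + ½e^{−λ|h−τ|}) + ξ(h∧τ)]
  / [θ²(1 − e^{−λh}) + ξh]` as `ε → 0`, `ε ≠ 0`, where `ξ = ν²λ/σ²`. -/
theorem cross_correlation_tendsto {Ω : Type*} [MeasurableSpace Ω] (μ : Measure Ω)
    [IsProbabilityMeasure μ]
    (lam sig nu th τ h t : ℝ)
    (hlam : 0 < lam) (hsig : 0 < sig) (hnu : 0 < nu) (hth : 0 < th)
    (hτ : 0 < τ) (hh : 0 < h) (ht : τ ≤ t)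
    (X1 X2 Z1 Z2 : ℝ → Ω → ℝ)
    (hX1L2 : ∀ s : ℝ, 0 ≤ s → MemLp (X1 s) 2 μ)
    (hX2L2 : ∀ s : ℝ, 0 ≤ s → MemLp (X2 s) 2 μ)
    (hZ1L2 : ∀ s : ℝ, 0 ≤ s → MemLp (Z1 s) 2 μ)
    (hZ2L2 : ∀ s : ℝ, 0 ≤ s → MemLp (Z2 s) 2 μ)
    (hX1cent : ∀ s : ℝ, 0 ≤ s → ∫ ω, X1 s ω ∂μ = 0)
    (hX2cent : ∀ s : ℝ, 0 ≤ s → ∫ ω, X2 s ω ∂μ = 0)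
    (hZ1cent : ∀ s : ℝ, 0 ≤ s → ∫ ω, Z1 s ω ∂μ = 0)
    (hZ2cent : ∀ s : ℝ, 0 ≤ s → ∫ ω, Z2 s ω ∂μ = 0)
    (hX1cov : ∀ s u : ℝ, 0 ≤ s → 0 ≤ u →
      cov μ (X1 s) (X1 u) = sig ^ 2 / (2 * lam) * Real.exp (-(lam * |s - u|)))
    (hX2cov : ∀ s u : ℝ, 0 ≤ s → 0 ≤ u →
      cov μ (X2 s) (X2 u) = sig ^ 2 / (2 * lam) * Real.exp (-(lam * |s - u|)))
    (hZ1cov : ∀ s u : ℝ, 0 ≤ s → 0 ≤ u → cov μ (Z1 s) (Z1 u) = min s u)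
    (hZ2cov : ∀ s u : ℝ, 0 ≤ s → 0 ≤ u → cov μ (Z2 s) (Z2 u) = min s u)
    (hX1X2 : ∀ s u : ℝ, 0 ≤ s → 0 ≤ u → cov μ (X1 s) (X2 u) = 0)
    (hX1Z1 : ∀ s u : ℝ, 0 ≤ s → 0 ≤ u → cov μ (X1 s) (Z1 u) = 0)
    (hX1Z2 : ∀ s u : ℝ, 0 ≤ s → 0 ≤ u → cov μ (X1 s) (Z2 u) = 0)
    (hX2Z1 : ∀ s u : ℝ, 0 ≤ s → 0 ≤ u → cov μ (X2 s) (Z1 u) = 0)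
    (hX2Z2 : ∀ s u : ℝ, 0 ≤ s → 0 ≤ u → cov μ (X2 s) (Z2 u) = 0)
    (hZ1Z2 : ∀ s u : ℝ, 0 ≤ s → 0 ≤ u → cov μ (Z1 s) (Z2 u) = 0) :
    Tendsto
      (fun eps : ℝ =>
        cov μ (ret th nu eps τ h t X1 Z1 X1 X2 Z1 Z2) (ret th nu eps τ h t X2 Z2 X1 X2 Z1 Z2)
          / Real.sqrt
              (cov μ (ret th nu eps τ h t X1 Z1 X1 X2 Z1 Z2)
                  (ret th nu eps τ h t X1 Z1 X1 X2 Z1 Z2) *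
                cov μ (ret th nu eps τ h t X2 Z2 X1 X2 Z1 Z2)
                  (ret th nu eps τ h t X2 Z2 X1 X2 Z1 Z2))
          / (2 * eps))
      (nhdsWithin 0 {0}ᶜ)
      (nhds
        ((th ^ 2 *
              (1 - Real.exp (-(lam * h)) - Real.exp (-(lam * τ))
                + (1 / 2) * Real.exp (-(lam * (h + τ)))
                + (1 / 2) * Real.exp (-(lam * |h - τ|)))
            + nu ^ 2 * lam / sig ^ 2 * min h τ)
          / (th ^ 2 * (1 - Real.exp (-(lam * h))) + nu ^ 2 * lam / sig ^ 2 * h))) := by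
  -- nonnegativity of the four times
  have p0 : (0:ℝ) ≤ t + h := by linarith
  have p1 : (0:ℝ) ≤ t := by linarith
  have p2 : (0:ℝ) ≤ t + h - τ := by linarith
  have p3 : (0:ℝ) ≤ t - τ := by linarith
  -- the sixteen base variables are in L²
  have hF : ∀ i, MemLp (bvec X1 X2 Z1 Z2 τ h t i) 2 μ := by
    simp only [Fin.forall_fin_succ, bvec,
      Matrix.cons_val_zero, Matrix.cons_val_succ]
    exact ⟨hX1L2 _ p0, hX1L2 _ p1, hX1L2 _ p2, hX1L2 _ p3,
      hZ1L2 _ p0, hZ1L2 _ p1, hZ1L2 _ p2, hZ1L2 _ p3,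
      hX2L2 _ p0, hX2L2 _ p1, hX2L2 _ p2, hX2L2 _ p3,
      hZ2L2 _ p0, hZ2L2 _ p1, hZ2L2 _ p2, hZ2L2 _ p3, fun i => i.elim0⟩
  -- symmetric versions of the vanishing cross-covariances
  have hX2X1 : ∀ s u : ℝ, 0 ≤ s → 0 ≤ u → cov μ (X2 s) (X1 u) = 0 := fun s u hs hu =>
    (cov_comm' μ _ _).trans (hX1X2 u s hu hs)
  have hZ1X1 : ∀ s u : ℝ, 0 ≤ s → 0 ≤ u → cov μ (Z1 s) (X1 u) = 0 := fun s u hs hu =>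
    (cov_comm' μ _ _).trans (hX1Z1 u s hu hs)
  have hZ2X1 : ∀ s u : ℝ, 0 ≤ s → 0 ≤ u → cov μ (Z2 s) (X1 u) = 0 := fun s u hs hu =>
    (cov_comm' μ _ _).trans (hX1Z2 u s hu hs)
  have hZ1X2 : ∀ s u : ℝ, 0 ≤ s → 0 ≤ u → cov μ (Z1 s) (X2 u) = 0 := fun s u hs hu =>
    (cov_comm' μ _ _).trans (hX2Z1 u s hu hs)
  have hZ2X2 : ∀ s u : ℝ, 0 ≤ s → 0 ≤ u → cov μ (Z2 s) (X2 u) = 0 := fun s u hs hu =>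
    (cov_comm' μ _ _).trans (hX2Z2 u s hu hs)
  have hZ2Z1 : ∀ s u : ℝ, 0 ≤ s → 0 ≤ u → cov μ (Z2 s) (Z1 u) = 0 := fun s u hs hu =>
    (cov_comm' μ _ _).trans (hZ1Z2 u s hu hs)
  -- absolute values of time differences
  have e01 : |t + h - t| = h := by rw [show t + h - t = h by ring]; exact abs_of_pos hh
  have e10 : |t - (t + h)| = h := by
    rw [show t - (t + h) = -h by ring, abs_neg]; exact abs_of_pos hh
  have e02 : |t + h - (t + h - τ)| = τ := by
    rw [show t + h - (t + h - τ) = τ by ring]; exact abs_of_pos hτ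
  have e20 : |t + h - τ - (t + h)| = τ := by
    rw [show t + h - τ - (t + h) = -τ by ring, abs_neg]; exact abs_of_pos hτ
  have e03 : |t + h - (t - τ)| = h + τ := by
    rw [show t + h - (t - τ) = h + τ by ring]; exact abs_of_pos (by linarith)
  have e30 : |t - τ - (t + h)| = h + τ := by
    rw [show t - τ - (t + h) = -(h + τ) by ring, abs_neg]; exact abs_of_pos (by linarith)
  have e12 : |t - (t + h - τ)| = |h - τ| := by
    rw [show t - (t + h - τ) = -(h - τ) by ring, abs_neg]
  have e21 : |t + h - τ - t| = |h - τ| := by rw [show t + h - τ - t = h - τ by ring]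
  have e13 : |t - (t - τ)| = τ := by
    rw [show t - (t - τ) = τ by ring]; exact abs_of_pos hτ
  have e31 : |t - τ - t| = τ := by
    rw [show t - τ - t = -τ by ring, abs_neg]; exact abs_of_pos hτ
  have e23 : |t + h - τ - (t - τ)| = h := by
    rw [show t + h - τ - (t - τ) = h by ring]; exact abs_of_pos hh
  have e32 : |t - τ - (t + h - τ)| = h := by
    rw [show t - τ - (t + h - τ) = -h by ring, abs_neg]; exact abs_of_pos hh
  -- minima of pairs of times
  have m01 : min (t + h) t = t := min_eq_right (by linarith)
  have m10 : min t (t + h) = t := min_eq_left (by linarith)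
  have m02 : min (t + h) (t + h - τ) = t + h - τ := min_eq_right (by linarith)
  have m20 : min (t + h - τ) (t + h) = t + h - τ := min_eq_left (by linarith)
  have m03 : min (t + h) (t - τ) = t - τ := min_eq_right (by linarith)
  have m30 : min (t - τ) (t + h) = t - τ := min_eq_left (by linarith)
  have m12 : min t (t + h - τ) = t - τ + min h τ := by
    rcases le_total h τ with hc | hc
    · rw [min_eq_right (by linarith), min_eq_left hc]; ring
    · rw [min_eq_left (by linarith), min_eq_right hc]; ring
  have m21 : min (t + h - τ) t = t - τ + min h τ := by rw [min_comm]; exact m12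
  have m13 : min t (t - τ) = t - τ := min_eq_right (by linarith)
  have m31 : min (t - τ) t = t - τ := min_eq_left (by linarith)
  have m23 : min (t + h - τ) (t - τ) = t - τ := min_eq_right (by linarith)
  have m32 : min (t - τ) (t + h - τ) = t - τ := min_eq_left (by linarith)
  -- the three key covariance identities
  have keyAB : ∀ eps : ℝ,
      cov μ (ret th nu eps τ h t X1 Z1 X1 X2 Z1 Z2) (ret th nu eps τ h t X2 Z2 X1 X2 Z1 Z2)
        = (2 * eps + 4 * eps ^ 2) *
            (th ^ 2 * (sig ^ 2 / lam) *
              (1 - Real.exp (-(lam * h)) - Real.exp (-(lam * τ))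
                + (1 / 2) * Real.exp (-(lam * (h + τ)))
                + (1 / 2) * Real.exp (-(lam * |h - τ|)))
              + nu ^ 2 * min h τ) := by
    intro eps
    rw [rep1 th nu eps τ h t X1 X2 Z1 Z2, rep2 th nu eps τ h t X1 X2 Z1 Z2,
      cov_sum μ _ _ hF hF _ _]
    simp only [Fin.sum_univ_succ, Fin.sum_univ_zero, bvec, cvecA, cvecB,
      Matrix.cons_val_zero, Matrix.cons_val_succ,
      hX1cov, hX2cov, hZ1cov, hZ2cov, hX1X2, hX2X1, hX1Z1, hZ1X1, hX1Z2, hZ2X1,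
      hX2Z1, hZ1X2, hX2Z2, hZ2X2, hZ1Z2, hZ2Z1, p0, p1, p2, p3,
      mul_zero, zero_mul, add_zero, zero_add,
      e01, e10, e02, e20, e03, e30, e12, e21, e13, e31, e23, e32,
      m01, m10, m02, m20, m03, m30, m12, m21, m13, m31, m23, m32,
      sub_self, abs_zero, min_self, neg_zero, Real.exp_zero, mul_one]
    ring
  have keyAA : ∀ eps : ℝ,
      cov μ (ret th nu eps τ h t X1 Z1 X1 X2 Z1 Z2) (ret th nu eps τ h t X1 Z1 X1 X2 Z1 Z2)
        = (th ^ 2 * (sig ^ 2 / lam) * (1 - Real.exp (-(lam * h))) + nu ^ 2 * h)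
          + (2 * eps + 4 * eps ^ 2) *
            (th ^ 2 * (sig ^ 2 / lam) *
              (1 - Real.exp (-(lam * h)) - Real.exp (-(lam * τ))
                + (1 / 2) * Real.exp (-(lam * (h + τ)))
                + (1 / 2) * Real.exp (-(lam * |h - τ|)))
              + nu ^ 2 * min h τ) := by
    intro eps
    rw [rep1 th nu eps τ h t X1 X2 Z1 Z2, cov_sum μ _ _ hF hF _ _]
    simp only [Fin.sum_univ_succ, Fin.sum_univ_zero, bvec, cvecA,
      Matrix.cons_val_zero, Matrix.cons_val_succ,
      hX1cov, hX2cov, hZ1cov, hZ2cov, hX1X2, hX2X1, hX1Z1, hZ1X1, hX1Z2, hZ2X1,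
      hX2Z1, hZ1X2, hX2Z2, hZ2X2, hZ1Z2, hZ2Z1, p0, p1, p2, p3,
      mul_zero, zero_mul, add_zero, zero_add,
      e01, e10, e02, e20, e03, e30, e12, e21, e13, e31, e23, e32,
      m01, m10, m02, m20, m03, m30, m12, m21, m13, m31, m23, m32,
      sub_self, abs_zero, min_self, neg_zero, Real.exp_zero, mul_one]
    ring
  have keyBB : ∀ eps : ℝ,
      cov μ (ret th nu eps τ h t X2 Z2 X1 X2 Z1 Z2) (ret th nu eps τ h t X2 Z2 X1 X2 Z1 Z2)
        = (th ^ 2 * (sig ^ 2 / lam) * (1 - Real.exp (-(lam * h))) + nu ^ 2 * h)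
          + (2 * eps + 4 * eps ^ 2) *
            (th ^ 2 * (sig ^ 2 / lam) *
              (1 - Real.exp (-(lam * h)) - Real.exp (-(lam * τ))
                + (1 / 2) * Real.exp (-(lam * (h + τ)))
                + (1 / 2) * Real.exp (-(lam * |h - τ|)))
              + nu ^ 2 * min h τ) := by
    intro eps
    rw [rep2 th nu eps τ h t X1 X2 Z1 Z2, cov_sum μ _ _ hF hF _ _]
    simp only [Fin.sum_univ_succ, Fin.sum_univ_zero, bvec, cvecB,
      Matrix.cons_val_zero, Matrix.cons_val_succ,
      hX1cov, hX2cov, hZ1cov, hZ2cov, hX1X2, hX2X1, hX1Z1, hZ1X1, hX1Z2, hZ2X1,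
      hX2Z1, hZ1X2, hX2Z2, hZ2X2, hZ1Z2, hZ2Z1, p0, p1, p2, p3,
      mul_zero, zero_mul, add_zero, zero_add,
      e01, e10, e02, e20, e03, e30, e12, e21, e13, e31, e23, e32,
      m01, m10, m02, m20, m03, m30, m12, m21, m13, m31, m23, m32,
      sub_self, abs_zero, min_self, neg_zero, Real.exp_zero, mul_one]
    ring
  -- abbreviate the two constants
  set CC : ℝ := th ^ 2 * (sig ^ 2 / lam) *
      (1 - Real.exp (-(lam * h)) - Real.exp (-(lam * τ))
        + (1 / 2) * Real.exp (-(lam * (h + τ)))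
        + (1 / 2) * Real.exp (-(lam * |h - τ|)))
      + nu ^ 2 * min h τ with hCCdef
  set VV : ℝ := th ^ 2 * (sig ^ 2 / lam) * (1 - Real.exp (-(lam * h))) + nu ^ 2 * h
    with hVVdef
  have hexp1 : Real.exp (-(lam * h)) < 1 := by
    have := Real.exp_lt_exp.mpr (show -(lam * h) < 0 by nlinarith)
    rwa [Real.exp_zero] at this
  have hVV : 0 < VV := by
    rw [hVVdef]
    have h1 : 0 < th ^ 2 * (sig ^ 2 / lam) := by positivity
    have h2 : 0 < th ^ 2 * (sig ^ 2 / lam) * (1 - Real.exp (-(lam * h))) :=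
      mul_pos h1 (by linarith)
    have h3 : 0 < nu ^ 2 * h := by positivity
    linarith
  -- eventual positivity of the common variance
  have hcont : Continuous fun eps : ℝ => VV + (2 * eps + 4 * eps ^ 2) * CC := by continuity
  have hqpos : ∀ᶠ eps in nhdsWithin (0:ℝ) {0}ᶜ, 0 < VV + (2 * eps + 4 * eps ^ 2) * CC := by
    refine Filter.Eventually.filter_mono nhdsWithin_le_nhds ?_
    have h0 : 0 < VV + (2 * (0:ℝ) + 4 * (0:ℝ) ^ 2) * CC := by simpa using hVV
    exact (hcont.continuousAt (x := 0)).eventually (lt_mem_nhds h0)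
  have hne : ∀ᶠ eps in nhdsWithin (0:ℝ) {0}ᶜ, eps ≠ 0 := by
    filter_upwards [eventually_mem_nhdsWithin] with x hx
    simpa using hx
  -- eventual identification with a nice rational function
  have heq : (fun eps : ℝ => (2 + 4 * eps) * CC / (2 * (VV + (2 * eps + 4 * eps ^ 2) * CC)))
      =ᶠ[nhdsWithin (0:ℝ) {0}ᶜ]
      (fun eps : ℝ =>
        cov μ (ret th nu eps τ h t X1 Z1 X1 X2 Z1 Z2) (ret th nu eps τ h t X2 Z2 X1 X2 Z1 Z2)
          / Real.sqrt
              (cov μ (ret th nu eps τ h t X1 Z1 X1 X2 Z1 Z2)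
                  (ret th nu eps τ h t X1 Z1 X1 X2 Z1 Z2) *
                cov μ (ret th nu eps τ h t X2 Z2 X1 X2 Z1 Z2)
                  (ret th nu eps τ h t X2 Z2 X1 X2 Z1 Z2))
          / (2 * eps)) := by
    filter_upwards [hqpos, hne] with eps hq hne0
    rw [keyAB eps, keyAA eps, keyBB eps, Real.sqrt_mul_self hq.le]
    field_simp
  -- the limit of the rational function
  have hlim : Tendsto
      (fun eps : ℝ => (2 + 4 * eps) * CC / (2 * (VV + (2 * eps + 4 * eps ^ 2) * CC)))
      (nhdsWithin (0:ℝ) {0}ᶜ) (nhds (CC / VV)) := by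
    have hc : ContinuousAt
        (fun eps : ℝ => (2 + 4 * eps) * CC / (2 * (VV + (2 * eps + 4 * eps ^ 2) * CC))) 0 := by
      apply ContinuousAt.div
      · fun_prop
      · fun_prop
      · show 2 * (VV + (2 * (0:ℝ) + 4 * (0:ℝ) ^ 2) * CC) ≠ 0
        have : 2 * (VV + (2 * (0:ℝ) + 4 * (0:ℝ) ^ 2) * CC) = 2 * VV := by ring
        rw [this]; positivity
    have h0 : (2 + 4 * (0:ℝ)) * CC / (2 * (VV + (2 * (0:ℝ) + 4 * (0:ℝ) ^ 2) * CC))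
        = CC / VV := by
      rw [show 2 * (VV + (2 * (0:ℝ) + 4 * (0:ℝ) ^ 2) * CC) = 2 * VV by ring,
        show (2 + 4 * (0:ℝ)) * CC = 2 * CC by ring,
        mul_div_mul_left _ _ (two_ne_zero)]
    exact h0 ▸ hc.continuousWithinAt
  -- identify the limit value
  have hLden : 0 < th ^ 2 * (1 - Real.exp (-(lam * h))) + nu ^ 2 * lam / sig ^ 2 * h := by
    have h1 : 0 < th ^ 2 * (1 - Real.exp (-(lam * h))) := by
      have : (0:ℝ) < th ^ 2 := by positivity
      nlinarith
    have h2 : 0 < nu ^ 2 * lam / sig ^ 2 * h := by positivity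
    linarith
  have hfinal : CC / VV
      = (th ^ 2 *
            (1 - Real.exp (-(lam * h)) - Real.exp (-(lam * τ))
              + (1 / 2) * Real.exp (-(lam * (h + τ)))
              + (1 / 2) * Real.exp (-(lam * |h - τ|)))
          + nu ^ 2 * lam / sig ^ 2 * min h τ)
        / (th ^ 2 * (1 - Real.exp (-(lam * h))) + nu ^ 2 * lam / sig ^ 2 * h) := by
    have hK : (sig ^ 2 / lam) ≠ 0 := by positivity
    have h1 : CC = (sig ^ 2 / lam) *
        (th ^ 2 *
            (1 - Real.exp (-(lam * h)) - Real.exp (-(lam * τ))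
              + (1 / 2) * Real.exp (-(lam * (h + τ)))
              + (1 / 2) * Real.exp (-(lam * |h - τ|)))
          + nu ^ 2 * lam / sig ^ 2 * min h τ) := by
      rw [hCCdef]; field_simp
    have h2 : VV = (sig ^ 2 / lam) *
        (th ^ 2 * (1 - Real.exp (-(lam * h))) + nu ^ 2 * lam / sig ^ 2 * h) := by
      rw [hVVdef]; field_simp
    rw [h1, h2, mul_div_mul_left _ _ hK]
  exact hfinal ▸ Filter.Tendsto.congr' heq hlim
end

section
/- Let λ, θ, ξ, τ > 0 and define f : (0,∞) → ℝ by f(h) = [θ²·(1 − e^{−λh} − e^{−λτ} + ½e^{−λ(h+τ)} + ½e^{−λ|h−τ|}) + ξ·min(h,τ)] / [θ²·(1 − e^{−λh}) + ξh]. Then f is differentiable on (0,τ) and on (τ,∞), the one-sided derivatives of f at h = τ both exist, and the left derivative at τ exceeds the right derivative at τ by exactly (θ²λ + ξ)/(θ²·(1 − e^{−λτ}) + ξτ) > 0; in particular, f is not differentiable at h = τ. -/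
/-- The kink of the scaled cross-correlation function at the momentum window `τ`
(Section 3 of the paper): with
`f(h) = [θ²(1 − e^{−λh} − e^{−λτ} + ½e^{−λ(h+τ)} + ½e^{−λ|h−τ|}) + ξ·min(h,τ)]
  / [θ²(1 − e^{−λh}) + ξh]`,
`f` is differentiable on `(0,τ)` and on `(τ,∞)`, both one-sided derivatives at `τ` exist,
the left derivative exceeds the right one by exactly
`(θ²λ + ξ)/(θ²(1 − e^{−λτ}) + ξτ) > 0`, and `f` is not differentiable at `τ`. -/
theorem kink_at_tau (lam th xi τ : ℝ) (hlam : 0 < lam) (hth : 0 < th) (hxi : 0 < xi)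
    (hτ : 0 < τ) :
    let f : ℝ → ℝ := fun h =>
      (th ^ 2 *
          (1 - Real.exp (-(lam * h)) - Real.exp (-(lam * τ))
            + (1 / 2) * Real.exp (-(lam * (h + τ)))
            + (1 / 2) * Real.exp (-(lam * |h - τ|)))
        + xi * min h τ)
      / (th ^ 2 * (1 - Real.exp (-(lam * h))) + xi * h)
    (∀ h ∈ Set.Ioo (0 : ℝ) τ, DifferentiableAt ℝ f h) ∧
    (∀ h ∈ Set.Ioi τ, DifferentiableAt ℝ f h) ∧
    (∃ dL dR : ℝ,
      HasDerivWithinAt f dL (Set.Iio τ) τ ∧ HasDerivWithinAt f dR (Set.Ioi τ) τ ∧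
      dL - dR = (th ^ 2 * lam + xi) / (th ^ 2 * (1 - Real.exp (-(lam * τ))) + xi * τ)) ∧
    0 < (th ^ 2 * lam + xi) / (th ^ 2 * (1 - Real.exp (-(lam * τ))) + xi * τ) ∧
    ¬ DifferentiableAt ℝ f τ := by
  intro f
  -- denominator and the two smooth branches
  set D : ℝ → ℝ := fun h => th ^ 2 * (1 - Real.exp (-(lam * h))) + xi * h with hDdef
  set NL : ℝ → ℝ := fun h =>
    th ^ 2 * (1 - Real.exp (-(lam * h)) - Real.exp (-(lam * τ))
      + (1 / 2) * Real.exp (-(lam * (h + τ)))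
      + (1 / 2) * Real.exp (-(lam * (τ - h)))) + xi * h with hNLdef
  set NR : ℝ → ℝ := fun h =>
    th ^ 2 * (1 - Real.exp (-(lam * h)) - Real.exp (-(lam * τ))
      + (1 / 2) * Real.exp (-(lam * (h + τ)))
      + (1 / 2) * Real.exp (-(lam * (h - τ)))) + xi * τ with hNRdef
  set fL : ℝ → ℝ := fun h => NL h / D h with hfLdef
  set fR : ℝ → ℝ := fun h => NR h / D h with hfRdef
  -- f agrees with the branches on the half-lines
  have heqL : ∀ h : ℝ, h ≤ τ → f h = fL h := by
    intro h hh
    simp only [f, fL, NL, D]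
    rw [abs_of_nonpos (by linarith), min_eq_left hh, neg_sub]
  have heqR : ∀ h : ℝ, τ ≤ h → f h = fR h := by
    intro h hh
    simp only [f, fR, NR, D]
    rw [abs_of_nonneg (by linarith), min_eq_right hh]
  -- positivity of the denominator
  have hDpos : ∀ x : ℝ, 0 < x → 0 < D x := by
    intro x hx
    have h1 : Real.exp (-(lam * x)) < 1 := by
      rw [Real.exp_lt_one_iff]; nlinarith
    have h2 : 0 < th ^ 2 := by positivity
    simp only [D]; nlinarith
  -- derivatives of the exponential building blocks
  have hE : ∀ x : ℝ, HasDerivAt (fun h : ℝ => Real.exp (-(lam * h)))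
      (-lam * Real.exp (-(lam * x))) x := by
    intro x
    have h1 : HasDerivAt (fun h : ℝ => -(lam * h)) (-lam) x := by
      simpa [Pi.neg_def] using ((hasDerivAt_id x).const_mul lam).neg
    simpa [mul_comm] using h1.exp
  have hE2 : ∀ x : ℝ, HasDerivAt (fun h : ℝ => Real.exp (-(lam * (h + τ))))
      (-lam * Real.exp (-(lam * (x + τ)))) x := by
    intro x
    have h1 : HasDerivAt (fun h : ℝ => -(lam * (h + τ))) (-lam) x := by
      simpa [Pi.neg_def] using (((hasDerivAt_id x).add_const τ).const_mul lam).neg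
    simpa [mul_comm] using h1.exp
  have hE3 : ∀ x : ℝ, HasDerivAt (fun h : ℝ => Real.exp (-(lam * (τ - h))))
      (lam * Real.exp (-(lam * (τ - x)))) x := by
    intro x
    have h1 : HasDerivAt (fun h : ℝ => -(lam * (τ - h))) lam x := by
      have := ((hasDerivAt_id x).const_sub τ).const_mul lam
      simpa [Pi.neg_def] using this.neg
    simpa [mul_comm] using h1.exp
  have hE4 : ∀ x : ℝ, HasDerivAt (fun h : ℝ => Real.exp (-(lam * (h - τ))))
      (-lam * Real.exp (-(lam * (x - τ)))) x := by
    intro x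
    have h1 : HasDerivAt (fun h : ℝ => -(lam * (h - τ))) (-lam) x := by
      simpa [Pi.neg_def] using (((hasDerivAt_id x).sub_const τ).const_mul lam).neg
    simpa [mul_comm] using h1.exp
  -- derivatives of numerators and denominator
  have hDder : ∀ x : ℝ, HasDerivAt D (th ^ 2 * (lam * Real.exp (-(lam * x))) + xi) x := by
    intro x
    have h1 := (((hasDerivAt_const x (1 : ℝ)).sub (hE x)).const_mul (th ^ 2)).add
      ((hasDerivAt_id x).const_mul xi)
    exact h1.congr_deriv (by ring)
  have hNLder : ∀ x : ℝ, HasDerivAt NL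
      (th ^ 2 * (lam * Real.exp (-(lam * x)) - (1 / 2) * lam * Real.exp (-(lam * (x + τ)))
        + (1 / 2) * lam * Real.exp (-(lam * (τ - x)))) + xi) x := by
    intro x
    have h1 := (((((hasDerivAt_const x (1 : ℝ)).sub (hE x)).sub
      (hasDerivAt_const x (Real.exp (-(lam * τ))))).add
      ((hE2 x).const_mul (1 / 2 : ℝ))).add
      ((hE3 x).const_mul (1 / 2 : ℝ))).const_mul (th ^ 2) |>.add
      ((hasDerivAt_id x).const_mul xi)
    exact h1.congr_deriv (by ring)
  have hNRder : ∀ x : ℝ, HasDerivAt NR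
      (th ^ 2 * (lam * Real.exp (-(lam * x)) - (1 / 2) * lam * Real.exp (-(lam * (x + τ)))
        - (1 / 2) * lam * Real.exp (-(lam * (x - τ))))) x := by
    intro x
    have h1 := (((((hasDerivAt_const x (1 : ℝ)).sub (hE x)).sub
      (hasDerivAt_const x (Real.exp (-(lam * τ))))).add
      ((hE2 x).const_mul (1 / 2 : ℝ))).add
      ((hE4 x).const_mul (1 / 2 : ℝ))).const_mul (th ^ 2) |>.add
      (hasDerivAt_const x (xi * τ))
    exact h1.congr_deriv (by ring)
  have hDτ : 0 < D τ := hDpos τ hτ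
  have hDτne : D τ ≠ 0 := ne_of_gt hDτ
  -- the two one-sided derivative candidates
  set NL' : ℝ := th ^ 2 * (lam * Real.exp (-(lam * τ)) - (1 / 2) * lam * Real.exp (-(lam * (τ + τ)))
    + (1 / 2) * lam * Real.exp (-(lam * (τ - τ)))) + xi with hNL'def
  set NR' : ℝ := th ^ 2 * (lam * Real.exp (-(lam * τ)) - (1 / 2) * lam * Real.exp (-(lam * (τ + τ)))
    - (1 / 2) * lam * Real.exp (-(lam * (τ - τ)))) with hNR'def
  set D' : ℝ := th ^ 2 * (lam * Real.exp (-(lam * τ))) + xi with hD'def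
  set dL : ℝ := (NL' * D τ - NL τ * D') / (D τ) ^ 2 with hdLdef
  set dR : ℝ := (NR' * D τ - NR τ * D') / (D τ) ^ 2 with hdRdef
  have hfLder : HasDerivAt fL dL τ := (hNLder τ).div (hDder τ) hDτne
  have hfRder : HasDerivAt fR dR τ := (hNRder τ).div (hDder τ) hDτne
  have hNLτeq : NL τ = NR τ := by simp only [NL, NR]
  have hkey : dL - dR = (th ^ 2 * lam + xi) / (th ^ 2 * (1 - Real.exp (-(lam * τ))) + xi * τ) := by
    have hdiff : NL' - NR' = th ^ 2 * lam + xi := by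
      simp only [NL', NR', sub_self, neg_zero, mul_zero, Real.exp_zero]
      ring
    have hDτeq : D τ = th ^ 2 * (1 - Real.exp (-(lam * τ))) + xi * τ := rfl
    rw [hdLdef, hdRdef, hNLτeq, ← hDτeq]
    field_simp
    nlinarith [hdiff, sq_nonneg (D τ)]
  -- one-sided derivatives of f
  have hdLw : HasDerivWithinAt f dL (Set.Iio τ) τ :=
    (hfLder.hasDerivWithinAt).congr (fun x hx => heqL x (le_of_lt hx)) (heqL τ le_rfl)
  have hdRw : HasDerivWithinAt f dR (Set.Ioi τ) τ :=
    (hfRder.hasDerivWithinAt).congr (fun x hx => heqR x (le_of_lt hx)) (heqR τ le_rfl)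
  have hpos : 0 < (th ^ 2 * lam + xi) / (th ^ 2 * (1 - Real.exp (-(lam * τ))) + xi * τ) := by
    apply div_pos (by positivity) hDτ
  refine ⟨?_, ?_, ⟨dL, dR, hdLw, hdRw, hkey⟩, hpos, ?_⟩
  · intro h hh
    have hD : D h ≠ 0 := ne_of_gt (hDpos h hh.1)
    have hfl : DifferentiableAt ℝ fL h := ((hNLder h).div (hDder h) hD).differentiableAt
    apply hfl.congr_of_eventuallyEq
    exact Filter.eventuallyEq_of_mem (Iio_mem_nhds hh.2) (fun x hx => heqL x (le_of_lt hx))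
  · intro h hh
    have hD : D h ≠ 0 := ne_of_gt (hDpos h (lt_trans hτ hh))
    have hfr : DifferentiableAt ℝ fR h := ((hNRder h).div (hDder h) hD).differentiableAt
    apply hfr.congr_of_eventuallyEq
    exact Filter.eventuallyEq_of_mem (Ioi_mem_nhds hh) (fun x hx => heqR x (le_of_lt hx))
  · intro hd
    have h1 : dL = deriv f τ :=
      (uniqueDiffWithinAt_Iio τ).eq_deriv _ hdLw (hd.hasDerivAt.hasDerivWithinAt)
    have h2 : dR = deriv f τ :=
      (uniqueDiffWithinAt_Ioi τ).eq_deriv _ hdRw (hd.hasDerivAt.hasDerivWithinAt)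
    have : dL - dR = 0 := by rw [h1, h2, sub_self]
    rw [hkey] at this
    exact absurd this (ne_of_gt hpos)
end
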